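/- arXiv:2010.11355 — 3 statements merged into one kernel-verified Lean document; each statement's English description precedes it below -/
import Mathlib

section
/- For every positive integer M, G₀(M) = Γ₀(M)·G₀(M)_{i∞}; equivalently, every matrix A ∈ G₀(M) can be written as A = γ·B where γ ∈ Γ₀(M) and B ∈ G₀(M) is upper triangular (i.e. B has lower-left entry 0). -/
/-- `x ∈ ℤ_(M)`, i.e. `x = a/b` with `a, b ∈ ℤ` and `gcd(b, M) = 1`. -/
def inZM (M : ℕ) (x : ℚ) : Prop :=
  ∃ a b : ℤ, Int.gcd b M = 1 ∧ x = a / b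

/-- `G₀(M) ⊆ GL₂(ℤ_(M))`: matrices with entries in `ℤ_(M)`, determinant a unit of `ℤ_(M)`,
and lower-left entry in `M·ℤ_(M)`. -/
def G0 (M : ℕ) : Set (Matrix (Fin 2) (Fin 2) ℚ) :=
  {γ | (∀ i j, inZM M (γ i j)) ∧ (∃ y : ℚ, inZM M y ∧ γ.det * y = 1) ∧
       (∃ x : ℚ, inZM M x ∧ γ 1 0 = M * x)}

/-- `Γ₀(M)` viewed as a set of rational matrices: integral matrices of determinant one whose
lower-left entry is divisible by `M`. -/
def Gamma0Q (M : ℕ) : Set (Matrix (Fin 2) (Fin 2) ℚ) :=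
  {γ | ∃ a b c d : ℤ, γ = !![(a : ℚ), b; c, d] ∧ a * d - b * c = 1 ∧ (M : ℤ) ∣ c}

lemma inZM_iff (M : ℕ) (x : ℚ) : inZM M x ↔ IsCoprime (x.den : ℤ) (M : ℤ) := by
  constructor
  · rintro ⟨a, b, hg, rfl⟩
    rcases eq_or_ne b 0 with rfl | hb
    · simpa using isCoprime_one_left
    · rw [show ((a : ℚ) / b) = Rat.divInt a b from (Rat.divInt_eq_div a b).symm]
      exact IsCoprime.of_isCoprime_of_dvd_left (Int.isCoprime_iff_gcd_eq_one.2 hg) (Rat.den_dvd a b)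
  · intro h
    exact ⟨x.num, x.den, Int.isCoprime_iff_gcd_eq_one.1 h, (Rat.num_div_den x).symm⟩

lemma inZM_rep {M : ℕ} {x : ℚ} (h : inZM M x) :
    ∃ a b : ℤ, b ≠ 0 ∧ IsCoprime b (M : ℤ) ∧ x = a / b :=
  ⟨x.num, x.den, by exact_mod_cast x.den_nz, (inZM_iff M x).1 h, (Rat.num_div_den x).symm⟩

lemma inZM_of_rep {M : ℕ} {x : ℚ} (a b : ℤ) (hb : IsCoprime b (M : ℤ)) (hx : x = a / b) :
    inZM M x :=
  ⟨a, b, Int.isCoprime_iff_gcd_eq_one.1 hb, hx⟩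

lemma inZM_int (M : ℕ) (n : ℤ) : inZM M (n : ℚ) :=
  inZM_of_rep n 1 isCoprime_one_left (by simp)

lemma inZM_add {M : ℕ} {x y : ℚ} (hx : inZM M x) (hy : inZM M y) : inZM M (x + y) := by
  obtain ⟨a, b, hb, hbM, rfl⟩ := inZM_rep hx
  obtain ⟨c, d, hd, hdM, rfl⟩ := inZM_rep hy
  refine inZM_of_rep (a * d + c * b) (b * d) (hbM.mul_left hdM) ?_
  field_simp
  push_cast; ring

lemma inZM_mul {M : ℕ} {x y : ℚ} (hx : inZM M x) (hy : inZM M y) : inZM M (x * y) := by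
  obtain ⟨a, b, hb, hbM, rfl⟩ := inZM_rep hx
  obtain ⟨c, d, hd, hdM, rfl⟩ := inZM_rep hy
  refine inZM_of_rep (a * c) (b * d) (hbM.mul_left hdM) ?_
  field_simp
  push_cast; ring

lemma inZM_neg {M : ℕ} {x : ℚ} (hx : inZM M x) : inZM M (-x) := by
  have := inZM_mul (inZM_int M (-1)) hx
  push_cast at this
  simpa using this

lemma inZM_lin {M : ℕ} {x y : ℚ} (hx : inZM M x) (hy : inZM M y) (m n : ℤ) :
    inZM M ((m : ℚ) * x + (n : ℚ) * y) :=
  inZM_add (inZM_mul (inZM_int M m) hx) (inZM_mul (inZM_int M n) hy)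

/-- `G₀(M) = Γ₀(M) · G₀(M)_{i∞}`: every `A ∈ G₀(M)` factors as `A = γ · B` with
`γ ∈ Γ₀(M)` and `B ∈ G₀(M)` upper triangular. -/
theorem G0_eq_Gamma0_mul_stab (M : ℕ) (hM : 0 < M)
    (A : Matrix (Fin 2) (Fin 2) ℚ) (hA : A ∈ G0 M) :
    ∃ γ ∈ Gamma0Q M, ∃ B ∈ G0 M, B 1 0 = 0 ∧ A = γ * B := by
  obtain ⟨hent, ⟨y, hy, hdet⟩, ⟨x, hx, hA10⟩⟩ := hA
  -- reduced representations
  obtain ⟨p, q, hq, hqM, hA00⟩ := inZM_rep (hent 0 0)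
  obtain ⟨r, s, hs, hsM, hxrs⟩ := inZM_rep hx
  -- Step 1: p is coprime to M
  have hdet2 : A.det = A 0 0 * A 1 1 - A 0 1 * A 1 0 := Matrix.det_fin_two A
  have hkey : A 0 0 * (A 1 1 * y) = 1 + (M : ℚ) * (x * (A 0 1 * y)) := by
    rw [hA10] at hdet2
    have := hdet
    rw [hdet2] at this
    linear_combination this
  have hz : inZM M (A 1 1 * y) := inZM_mul (hent 1 1) hy
  have hw : inZM M (x * (A 0 1 * y)) := inZM_mul hx (inZM_mul (hent 0 1) hy)
  obtain ⟨e, f, hf, hfM, hef⟩ := inZM_rep hz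
  obtain ⟨g', k, hk, hkM, hgk⟩ := inZM_rep hw
  have hpM : IsCoprime p (M : ℤ) := by
    have hq' : (q : ℚ) ≠ 0 := Int.cast_ne_zero.2 hq
    have hf' : (f : ℚ) ≠ 0 := Int.cast_ne_zero.2 hf
    have hk' : (k : ℚ) ≠ 0 := Int.cast_ne_zero.2 hk
    have hQ : ((p * e * k : ℤ) : ℚ) = ((q * f * k + M * g' * q * f : ℤ) : ℚ) := by
      push_cast
      rw [hA00, hef, hgk] at hkey
      field_simp at hkey
      linear_combination hkey
    have hZ : p * e * k = q * f * k + (M : ℤ) * g' * q * f := Int.cast_injective hQ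
    have h1 : IsCoprime (q * f * k) (M : ℤ) := (hqM.mul_left hfM).mul_left hkM
    have h2 : IsCoprime (q * f * k + (M : ℤ) * (g' * q * f)) (M : ℤ) := by
      have := h1.add_mul_left_left (g' * q * f)
      -- need `+ M * z` instead of `+ z * M`
      convert h1.add_mul_right_left (g' * q * f) using 2
      · rfl
      · ring
    have h3 : IsCoprime (p * e * k) (M : ℤ) := by
      rw [show p * e * k = q * f * k + (M : ℤ) * (g' * q * f) by linarith [hZ]]
      exact h2
    exact (h3.of_mul_left_left).of_mul_left_left
  -- Step 2: the primitive vector (a, c)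
  set u : ℤ := p * s with hu
  set v : ℤ := r * q with hv
  have hA00' : A 0 0 = (u : ℚ) / ((q : ℚ) * s) := by
    rw [hA00]; push_cast [hu]
    field_simp
  have hA10' : A 1 0 = (M : ℚ) * v / ((q : ℚ) * s) := by
    rw [hA10, hxrs]; push_cast [hv]
    field_simp
  -- u, v not both zero
  have hne : ¬(u = 0 ∧ v = 0) := by
    rintro ⟨hu0, hv0⟩
    have h00 : A 0 0 = 0 := by rw [hA00', hu0]; simp
    have h10 : A 1 0 = 0 := by rw [hA10', hv0]; simp
    rw [hdet2, h00, h10] at hdet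
    simp at hdet
  set g : ℕ := Int.gcd u v with hg
  have hg0 : 0 < g := Nat.pos_of_ne_zero (fun h => hne (Int.gcd_eq_zero_iff.1 h))
  set a : ℤ := u / g with ha
  set c' : ℤ := v / g with hc'
  have hua : u = g * a := by
    rw [ha, Int.mul_ediv_cancel' (Int.gcd_dvd_left u v)]
  have hvc : v = g * c' := by
    rw [hc', Int.mul_ediv_cancel' (Int.gcd_dvd_right u v)]
  have hac' : IsCoprime a c' := Int.isCoprime_iff_gcd_eq_one.2 (Int.gcd_div_gcd_div_gcd hg0)
  have haM : IsCoprime a (M : ℤ) := by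
    have huM : IsCoprime u (M : ℤ) := hpM.mul_left hsM
    exact IsCoprime.of_isCoprime_of_dvd_left huM ⟨(g : ℤ), by linarith [hua]⟩
  set c : ℤ := (M : ℤ) * c' with hc
  have hacc : IsCoprime a c := haM.mul_right hac'
  obtain ⟨D, Bb, hDB⟩ := hacc
  -- D * a + Bb * c = 1
  set P : Matrix (Fin 2) (Fin 2) ℚ := !![(D : ℚ), (Bb : ℚ); (-c : ℤ), (a : ℚ)] with hP
  set γ : Matrix (Fin 2) (Fin 2) ℚ := !![(a : ℚ), ((-Bb : ℤ) : ℚ); (c : ℚ), (D : ℚ)] with hγ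
  have hBez : (D : ℚ) * a + (Bb : ℚ) * c = 1 := by exact_mod_cast hDB
  have hqs : (q : ℚ) * (s : ℚ) ≠ 0 :=
    mul_ne_zero (Int.cast_ne_zero.2 hq) (Int.cast_ne_zero.2 hs)
  have hZident : c * u = a * ((M : ℤ) * v) := by rw [hua, hvc, hc]; ring
  have hQid : (c : ℚ) * u = (a : ℚ) * ((M : ℚ) * v) := by exact_mod_cast hZident
  have hB10 : -((c : ℚ)) * A 0 0 + (a : ℚ) * A 1 0 = 0 := by
    rw [hA00', hA10']
    field_simp
    linear_combination (-1 : ℚ) * hQid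
  have hγP : γ * P = 1 := by
    ext i j
    fin_cases i <;> fin_cases j <;>
      simp [hγ, hP, Matrix.mul_apply, Fin.sum_univ_two, Matrix.one_apply] <;>
      push_cast <;> linarith [hBez]
  have hPA : ∀ i j, (P * A) i j = P i 0 * A 0 j + P i 1 * A 1 j := by
    intro i j
    rw [Matrix.mul_apply, Fin.sum_univ_two]
  refine ⟨γ, ⟨a, -Bb, c, D, rfl, by push_cast at hDB ⊢; linarith [hDB], ⟨c', hc⟩⟩, P * A, ?_, ?_, ?_⟩
  · -- P * A ∈ G0 M
    refine ⟨?_, ⟨y, hy, ?_⟩, 0, ⟨0, 1, by simp, by simp⟩, ?_⟩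
    · intro i j
      rw [hPA]
      fin_cases i <;> simp [hP] <;>
        first
        | exact inZM_add (inZM_mul (inZM_int M D) (hent 0 j))
            (inZM_mul (inZM_int M Bb) (hent 1 j))
        | exact inZM_add (inZM_neg (inZM_mul (inZM_int M c) (hent 0 j)))
            (inZM_mul (inZM_int M a) (hent 1 j))
    · rw [Matrix.det_mul, hP, Matrix.det_fin_two_of]
      push_cast
      rw [show (D : ℚ) * a - Bb * (-c) = 1 by linarith [hBez], one_mul]
      exact hdet
    · rw [hPA]
      simp [hP]
      push_cast
      linear_combination hB10
  · rw [hPA 1 0]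
    simp [hP]
    push_cast
    linear_combination hB10
  · rw [← Matrix.mul_assoc, hγP, Matrix.one_mul]
end

section
/- Let M be a positive integer, write M = f²·M₀ with M₀ squarefree, and let m be a positive integer. Set D := gcd(M, m²) and let u, v be integers with gcd(M,m)·m·v − M·u = D. Then the generalized Atkin–Lehner involution W_m^M := (1/√D)·(m, u; M, gcd(M,m)·v) lies in Γ₀^{*,gcd(f,m)}(M). -/
/-- `Γ₀^{*,h}(M)`: the set of matrices `(1/√e)·(e·p, q/h; M·r/h, e·s)` of determinant `1`
with `e` a positive integer dividing `M/h²` and `p, q, r, s ∈ ℤ`. -/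
def GammaStar (M h : ℕ) : Set (Matrix (Fin 2) (Fin 2) ℝ) :=
  {W | W.det = 1 ∧ ∃ (e : ℕ) (p q r s : ℤ), 0 < e ∧ e ∣ M / h ^ 2 ∧
    W = (Real.sqrt e)⁻¹ • !![(e : ℝ) * p, (q : ℝ) / h; (M : ℝ) * r / h, (e : ℝ) * s]}

private lemma auxC (M₀ f m : ℕ) (hM₀ : Squarefree M₀) (hf : f ≠ 0) (hm : m ≠ 0) :
    Nat.gcd (f^2*M₀) (m^2) ∣ Nat.gcd f m * m := by
  have hM0 : M₀ ≠ 0 := hM₀.ne_zero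
  have h1 : f^2*M₀ ≠ 0 := by positivity
  have h2 : m^2 ≠ 0 := by positivity
  have h3 : Nat.gcd f m ≠ 0 := Nat.gcd_ne_zero_left hf
  rw [← Nat.factorization_le_iff_dvd (Nat.gcd_ne_zero_left h1) (by positivity)]
  rw [Finsupp.le_def]
  intro p
  rw [Nat.factorization_gcd h1 h2, Nat.factorization_mul h3 hm,
    Nat.factorization_mul (by positivity : f^2 ≠ 0) hM0, Nat.factorization_pow,
    Nat.factorization_pow]
  simp only [Finsupp.inf_apply, Finsupp.add_apply, Finsupp.smul_apply, smul_eq_mul]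
  rw [Nat.factorization_gcd hf hm]
  simp only [Finsupp.inf_apply]
  have := hM₀.natFactorization_le_one p
  omega

private lemma auxD (M₀ f m : ℕ) (hM₀ : Squarefree M₀) (hf : f ≠ 0) (hm : m ≠ 0) :
    Nat.gcd (f^2*M₀) (m^2) ∣ Nat.gcd f m * Nat.gcd (f^2*M₀) m := by
  have hM0 : M₀ ≠ 0 := hM₀.ne_zero
  have h1 : f^2*M₀ ≠ 0 := by positivity
  have h2 : m^2 ≠ 0 := by positivity
  have h3 : Nat.gcd f m ≠ 0 := Nat.gcd_ne_zero_left hf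
  have h4 : Nat.gcd (f^2*M₀) m ≠ 0 := Nat.gcd_ne_zero_left h1
  rw [← Nat.factorization_le_iff_dvd (Nat.gcd_ne_zero_left h1) (by positivity)]
  rw [Finsupp.le_def]
  intro p
  rw [Nat.factorization_gcd h1 h2, Nat.factorization_mul h3 h4,
    Nat.factorization_gcd h1 hm, Nat.factorization_gcd hf hm,
    Nat.factorization_mul (by positivity : f^2 ≠ 0) hM0]
  simp only [Nat.factorization_pow, Finsupp.inf_apply, Finsupp.add_apply,
    Finsupp.smul_apply, smul_eq_mul]
  have := hM₀.natFactorization_le_one p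
  omega

/-- The generalized Atkin–Lehner involution
`W_m^M = (1/√D)·(m, u; M, gcd(M,m)·v)`, where `D = gcd(M, m²)` and
`gcd(M,m)·m·v - M·u = D`, lies in `Γ₀^{*,gcd(f,m)}(M)` (where `M = f²·M₀`, `M₀` squarefree). -/
theorem genAtkinLehner_mem_GammaStar (M M₀ f m : ℕ) (hM : 0 < M) (hm : 0 < m)
    (hMf : M = f ^ 2 * M₀) (hM₀ : Squarefree M₀)
    (u v : ℤ) (huv : (Nat.gcd M m : ℤ) * m * v - (M : ℤ) * u = (Nat.gcd M (m ^ 2) : ℤ)) :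
    ((Real.sqrt (Nat.gcd M (m ^ 2)))⁻¹ •
        !![(m : ℝ), (u : ℝ); (M : ℝ), (Nat.gcd M m : ℝ) * v]) ∈ GammaStar M (Nat.gcd f m) := by
  have hf : f ≠ 0 := by rintro rfl; simp at hMf; omega
  have hM0 : M₀ ≠ 0 := hM₀.ne_zero
  set g := Nat.gcd M m with hgdef
  set D := Nat.gcd M (m^2) with hDdef
  set h := Nat.gcd f m with hhdef
  have hMne : M ≠ 0 := hM.ne'
  have hmne : m ≠ 0 := hm.ne'
  have hDpos : 0 < D := Nat.gcd_pos_of_pos_left _ hM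
  have hhpos : 0 < h := Nat.gcd_pos_of_pos_left _ (Nat.pos_of_ne_zero hf)
  have hh2M : h ^ 2 ∣ M := hMf ▸ dvd_mul_of_dvd_left
    (pow_dvd_pow_of_dvd (Nat.gcd_dvd_left f m) 2) _
  have hh2D : h ^ 2 ∣ D := Nat.dvd_gcd hh2M (pow_dvd_pow_of_dvd (Nat.gcd_dvd_right f m) 2)
  have hDm : D ∣ h * m := by rw [hDdef, hMf]; exact auxC M₀ f m hM₀ hf hmne
  have hDg : D ∣ h * g := by rw [hDdef, hgdef, hMf]; exact auxD M₀ f m hM₀ hf hmne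
  set e := D / h ^ 2 with hedef
  have heD : D = h ^ 2 * e := (Nat.mul_div_cancel' hh2D).symm
  have hepos : 0 < e := Nat.div_pos (Nat.le_of_dvd hDpos hh2D) (by positivity)
  have hkm : h * e ∣ m := by
    have : h * (h * e) ∣ h * m := by rw [← mul_assoc, ← sq, ← heD]; exact hDm
    exact (mul_dvd_mul_iff_left hhpos.ne').mp this
  have hkg : h * e ∣ g := by
    have : h * (h * e) ∣ h * g := by rw [← mul_assoc, ← sq, ← heD]; exact hDg
    exact (mul_dvd_mul_iff_left hhpos.ne').mp this
  have hpm : h * e * (m / (h * e)) = m := Nat.mul_div_cancel' hkm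
  have hsg : h * e * (g / (h * e)) = g := Nat.mul_div_cancel' hkg
  have hsqe : (0:ℝ) < Real.sqrt e := Real.sqrt_pos.2 (by exact_mod_cast hepos)
  have hhR : (0:ℝ) < (h:ℝ) := by exact_mod_cast hhpos
  have hsqD : Real.sqrt D = h * Real.sqrt e := by
    rw [heD]; push_cast
    rw [Real.sqrt_mul (by positivity), Real.sqrt_sq (by positivity)]
  constructor
  · rw [Matrix.det_smul, Matrix.det_fin_two_of]
    have hD' : ((m:ℝ) * ((g:ℝ) * v) - (u:ℝ) * M) = (D:ℝ) := by
      have := congrArg (Int.cast : ℤ → ℝ) huv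
      push_cast at this
      linarith
    rw [hD', Fintype.card_fin]
    rw [← Real.sqrt_inv, Real.sq_sqrt (by positivity)]
    rw [inv_mul_cancel₀ (by exact_mod_cast hDpos.ne')]
  · refine ⟨e, ((m / (h * e) : ℕ) : ℤ), u, 1, ((g / (h * e) : ℕ) : ℤ) * v, hepos, ?_, ?_⟩
    · obtain ⟨t, ht⟩ := Nat.gcd_dvd_left M (m ^ 2)
      refine ⟨t, ?_⟩
      rw [ht, ← hDdef, heD, mul_assoc, Nat.mul_div_cancel_left _ (by positivity : 0 < h^2)]
    · have hmR : (m:ℝ) = h * e * ((m / (h * e) : ℕ) : ℝ) := by exact_mod_cast hpm.symm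
      have hgR : (g:ℝ) = h * e * ((g / (h * e) : ℕ) : ℝ) := by exact_mod_cast hsg.symm
      ext i j
      fin_cases i <;> fin_cases j <;>
        simp only [Fin.zero_eta, Fin.mk_one, Matrix.smul_apply, Matrix.cons_val',
          Matrix.cons_val_zero, Matrix.cons_val_one, Matrix.head_cons, Matrix.head_fin_const,
          Matrix.empty_val', Matrix.cons_val_fin_one, smul_eq_mul, hsqD, Int.cast_mul,
          Int.cast_natCast, Int.cast_one, Matrix.of_apply]
      · rw [hmR]; field_simp
      · field_simp
      · field_simp
      · rw [hgR]; field_simp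
end

section
/- For a positive integer M: (i) the greatest common divisor of the set {a − d : a, d ∈ ℤ, there exist b, c ∈ ℤ with (a b; c d) ∈ Γ₀(M)} (equivalently, of {a − d : a, d ∈ ℤ, ad ≡ 1 mod M}) equals gcd(M, 24); (ii) the greatest common divisor of {a − d : a, d ∈ ℤ, both a and d coprime to M} equals gcd(M, 2). Consequently Γ₀(M) = Γ₀^{(M')}(M) where M' := gcd(M, 24). -/
set_option maxHeartbeats 1000000 in
lemma sq24 (g : ℕ) (hg : g ∣ 24) : ∀ x y : ZMod g, x * y = 1 → x ^ 2 = 1 := by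
  have h : g ≤ 24 := Nat.le_of_dvd (by norm_num) hg
  interval_cases g <;> first
    | (exfalso; revert hg; decide)
    | decide

lemma backward_core (M : ℕ) (hM : 0 < M) (a d : ℤ)
    (h : a * d ≡ 1 [ZMOD (M : ℤ)]) : ((Nat.gcd M 24 : ℕ) : ℤ) ∣ a - d := by
  set G : ℕ := Nat.gcd M 24 with hG
  have hGM : (G : ℤ) ∣ (M : ℤ) := Int.natCast_dvd_natCast.mpr (Nat.gcd_dvd_left _ _)
  have h' : a * d ≡ 1 [ZMOD (G : ℤ)] := h.of_dvd hGM
  have hAD : ((a : ZMod G)) * ((d : ZMod G)) = 1 := by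
    have := (ZMod.intCast_eq_intCast_iff (a * d) 1 G).mpr h'
    push_cast at this
    rw [← this]
  have hD2 : (d : ZMod G) ^ 2 = 1 := sq24 G (Nat.gcd_dvd_right _ _) _ _ (by rw [mul_comm]; exact hAD)
  have : (a : ZMod G) = (d : ZMod G) := by
    calc (a : ZMod G) = (a : ZMod G) * ((d : ZMod G) ^ 2) := by rw [hD2, mul_one]
      _ = ((a : ZMod G) * (d : ZMod G)) * (d : ZMod G) := by ring
      _ = (d : ZMod G) := by rw [hAD, one_mul]
  have := (ZMod.intCast_eq_intCast_iff a d G).mp this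
  exact Int.ModEq.dvd this.symm

lemma liftUnit (M q : ℕ) (hM : M ≠ 0) (hq : q ∣ M) (v : (ZMod q)ˣ) :
    ∃ x : ℤ, IsUnit (x : ZMod M) ∧ (x : ZMod q) = v := by
  have : NeZero M := ⟨hM⟩
  obtain ⟨u, hu⟩ := ZMod.unitsMap_surjective hq v
  refine ⟨((u : ZMod M).val : ℤ), ?_, ?_⟩
  · push_cast
    rw [ZMod.natCast_val, ZMod.cast_id]
    exact u.isUnit
  · push_cast
    rw [ZMod.natCast_val]
    have : (ZMod.cast (u : ZMod M) : ZMod q) = (ZMod.castHom hq (ZMod q)) (u : ZMod M) := rfl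
    rw [this, ← hu]; rfl

lemma forward_core (M : ℕ) (hM : 0 < M) (n : ℤ)
    (H : ∀ a d : ℤ, a * d ≡ 1 [ZMOD (M : ℤ)] → n ∣ a - d) :
    n ∣ (Nat.gcd M 24 : ℤ) := by
  have hnM : n ∣ (M : ℤ) := by
    have := H ((M : ℤ) + 1) 1 (by
      show Int.ModEq _ _ _
      exact Int.modEq_iff_dvd.mpr (by rw [show (1 : ℤ) - ((M:ℤ)+1)*1 = -M by ring]; exact dvd_neg.mpr dvd_rfl))
    simpa using this
  have hn0 : n ≠ 0 := by
    rintro rfl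
    have : (M : ℤ) = 0 := zero_dvd_iff.mp hnM
    simp_all [hM.ne']
  have instM : NeZero M := ⟨hM.ne'⟩
  -- key: n divides x^2 - 1 for every integer x that is a unit mod M
  have key : ∀ x : ℤ, IsUnit (x : ZMod M) → n ∣ x ^ 2 - 1 := by
    intro x hx
    set y : ℤ := ((((x : ZMod M)⁻¹).val : ℕ) : ℤ) with hy
    have hyc : ((y : ℤ) : ZMod M) = (x : ZMod M)⁻¹ := by
      rw [hy]
      push_cast
      rw [ZMod.natCast_val, ZMod.cast_id]
    have hxy : ((x * y : ℤ) : ZMod M) = ((1 : ℤ) : ZMod M) := by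
      push_cast
      push_cast at hyc
      rw [hyc]
      exact ZMod.mul_inv_of_unit _ hx
    have hmod : x * y ≡ 1 [ZMOD (M : ℤ)] := (ZMod.intCast_eq_intCast_iff _ _ _).mp hxy
    have h1 : n ∣ x - y := H x y hmod
    have h2 : (M : ℤ) ∣ x * y - 1 := by
      refine (ZMod.intCast_zmod_eq_zero_iff_dvd (x * y - 1) M).mp ?_
      rw [Int.cast_sub, hxy]
      simp
    have : x ^ 2 - 1 = x * (x - y) + (x * y - 1) := by ring
    rw [this]
    exact dvd_add (Dvd.dvd.mul_left h1 x) (dvd_trans hnM h2)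
  set m : ℕ := n.natAbs with hmdef
  have hm0 : m ≠ 0 := Int.natAbs_ne_zero.mpr hn0
  have hmM : m ∣ M := Int.natCast_dvd_natCast.mp (Int.natAbs_dvd.mpr hnM)
  have keym : ∀ x : ℤ, IsUnit (x : ZMod M) → (m : ℤ) ∣ x ^ 2 - 1 := fun x hx =>
    (Int.natAbs_dvd).mpr (key x hx)
  have factq : ∀ q : ℕ, q ∣ m → ∀ v : (ZMod q)ˣ, (v : ZMod q) ^ 2 = 1 := by
    intro q hq v
    obtain ⟨x, hx, hxv⟩ := liftUnit M q hM.ne' (hq.trans hmM) v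
    have h : (q : ℤ) ∣ x ^ 2 - 1 := dvd_trans (Int.natCast_dvd_natCast.mpr hq) (keym x hx)
    have : ((x ^ 2 - 1 : ℤ) : ZMod q) = 0 := (ZMod.intCast_zmod_eq_zero_iff_dvd _ q).mpr h
    push_cast at this
    rw [hxv] at this
    linear_combination this
  have h16 : ¬ (16 ∣ m) := by
    intro h
    have hu : IsUnit (3 : ZMod 16) := by decide
    have := factq 16 h hu.unit
    rw [IsUnit.unit_spec] at this
    revert this; decide
  have h9 : ¬ (9 ∣ m) := by
    intro h
    have hu : IsUnit (2 : ZMod 9) := by decide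
    have := factq 9 h hu.unit
    rw [IsUnit.unit_spec] at this
    revert this; decide
  have hp : ∀ p : ℕ, p.Prime → 5 ≤ p → ¬ p ∣ m := by
    intro p pp hp5 hdvd
    have hnd : ¬ p ∣ 2 := fun h => absurd (Nat.le_of_dvd two_pos h) (by omega)
    have hu : IsUnit ((2 : ℕ) : ZMod p) := by
      rw [ZMod.isUnit_iff_coprime]
      exact Nat.coprime_comm.mp (pp.coprime_iff_not_dvd.mpr hnd)
    have := factq p hdvd hu.unit
    rw [IsUnit.unit_spec] at this
    have h3 : ((3 : ℕ) : ZMod p) = 0 := by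
      push_cast
      push_cast at this
      linear_combination this
    have hd3 := (ZMod.natCast_eq_zero_iff 3 p).mp h3
    have := Nat.le_of_dvd (by norm_num) hd3
    have := pp.two_le
    interval_cases p <;> omega
  have hm24 : m ∣ 24 := by
    rw [← Nat.factorization_le_iff_dvd hm0 (by norm_num)]
    intro p
    rcases Nat.eq_zero_or_pos (m.factorization p) with h | h
    · simp [h]
    have pp : p.Prime := Nat.prime_of_mem_primeFactors
      ((Nat.support_factorization m) ▸ Finsupp.mem_support_iff.mpr h.ne')
    rcases lt_or_ge p 5 with h5 | h5
    · have h2le := pp.two_le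
      interval_cases p
      · -- p = 2
        have hnd : ¬ 2 ^ 4 ∣ m := by simpa using h16
        have hle : m.factorization 2 ≤ 3 := by
          by_contra hc
          exact hnd ((pp.pow_dvd_iff_le_factorization hm0).mpr (by omega))
        calc m.factorization 2 ≤ 3 := hle
          _ ≤ (24:ℕ).factorization 2 := by
              rw [show (24:ℕ) = 2^3*3 from by norm_num,
                Nat.factorization_mul (by norm_num) (by norm_num),
                Nat.Prime.factorization_pow Nat.prime_two,
                Nat.Prime.factorization Nat.prime_three]
              simp [Finsupp.single_apply]
      · -- p = 3
        have hnd : ¬ 3 ^ 2 ∣ m := by simpa using h9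
        have hle : m.factorization 3 ≤ 1 := by
          by_contra hc
          exact hnd ((pp.pow_dvd_iff_le_factorization hm0).mpr (by omega))
        calc m.factorization 3 ≤ 1 := hle
          _ ≤ (24:ℕ).factorization 3 := by
              rw [show (24:ℕ) = 2^3*3 from by norm_num,
                Nat.factorization_mul (by norm_num) (by norm_num),
                Nat.Prime.factorization_pow Nat.prime_two,
                Nat.Prime.factorization Nat.prime_three]
              simp [Finsupp.single_apply]
      · exact absurd pp (by norm_num)
    · exact absurd (Nat.dvd_of_factorization_pos h.ne') (hp p pp h5)
  exact Int.natAbs_dvd.mp (Int.natCast_dvd_natCast.mpr (Nat.dvd_gcd hmM hm24))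

/-- Lemma `lem:e(M)`: (i) the gcd of all `a - d` over matrices `(a b; c d) ∈ Γ₀(M)`
(equivalently, over all `a, d` with `ad ≡ 1 (mod M)`) is `gcd(M, 24)`;
(ii) the gcd of all `a - d` with `a, d` coprime to `M` is `gcd(M, 2)`.
Consequently `Γ₀(M) = Γ₀^{(M')}(M)` for `M' = gcd(M, 24)`, i.e. every
`(a b; c d) ∈ Γ₀(M)` satisfies `a ≡ d (mod gcd(M, 24))`. -/
theorem gcd_diag_diff_Gamma0 (M : ℕ) (hM : 0 < M) :
    (∀ n : ℤ,
      (∀ a b c d : ℤ, a * d - b * c = 1 → (M : ℤ) ∣ c → n ∣ a - d) ↔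
        n ∣ (Nat.gcd M 24 : ℤ)) ∧
    (∀ n : ℤ,
      (∀ a d : ℤ, a * d ≡ 1 [ZMOD (M : ℤ)] → n ∣ a - d) ↔ n ∣ (Nat.gcd M 24 : ℤ)) ∧
    (∀ n : ℤ,
      (∀ a d : ℤ, Int.gcd a M = 1 → Int.gcd d M = 1 → n ∣ a - d) ↔
        n ∣ (Nat.gcd M 2 : ℤ)) ∧
    (∀ a b c d : ℤ, a * d - b * c = 1 → (M : ℤ) ∣ c →
      a ≡ d [ZMOD (Nat.gcd M 24 : ℤ)]) := by

  have det_to_modeq : ∀ a b c d : ℤ, a * d - b * c = 1 → (M : ℤ) ∣ c →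
      a * d ≡ 1 [ZMOD (M : ℤ)] := by
    intro a b c d hdet hc
    refine (Int.modEq_iff_dvd.mpr ?_)
    rw [show (1 : ℤ) - a * d = -(b * c) by linarith]
    exact dvd_neg.mpr (Dvd.dvd.mul_left hc b)
  refine ⟨?_, ?_, ?_, ?_⟩
  · -- part 1
    intro n
    constructor
    · intro H
      apply forward_core M hM
      intro a d h
      obtain ⟨k, hk⟩ := (Int.modEq_iff_dvd.mp h.symm)
      exact H a k M d (by linarith) dvd_rfl
    · intro hn a b c d hdet hc
      exact hn.trans (backward_core M hM a d (det_to_modeq a b c d hdet hc))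
  · -- part 2
    intro n
    exact ⟨forward_core M hM n, fun hn a d h => hn.trans (backward_core M hM a d h)⟩
  · -- part 3
    intro n
    constructor
    · intro H
      have hcop1 : Int.gcd ((M : ℤ) + 1) M = 1 :=
        Int.isCoprime_iff_gcd_eq_one.mp ⟨1, -1, by ring⟩
      have hcop1' : Int.gcd 1 M = 1 := Int.isCoprime_iff_gcd_eq_one.mp isCoprime_one_left
      have hnM : n ∣ (M : ℤ) := by
        have := H ((M : ℤ) + 1) 1 hcop1 hcop1'
        simpa using this
      rcases Nat.even_or_odd M with hev | hod
      · have hcop2 : Int.gcd ((M : ℤ) - 1) M = 1 :=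
          Int.isCoprime_iff_gcd_eq_one.mp ⟨-1, 1, by ring⟩
        have hn2 : n ∣ (2 : ℤ) := by
          have := H ((M : ℤ) + 1) ((M : ℤ) - 1) hcop1 hcop2
          simpa using this
        have h1 : n.natAbs ∣ M := Int.natCast_dvd_natCast.mp (Int.natAbs_dvd.mpr hnM)
        have h2 : n.natAbs ∣ 2 := by
          have := Int.natAbs_dvd.mpr hn2
          exact_mod_cast Int.natCast_dvd_natCast.mp (by exact_mod_cast this)
        exact Int.natAbs_dvd.mp (Int.natCast_dvd_natCast.mpr (Nat.dvd_gcd h1 h2))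
      · have hcop2 : Int.gcd 2 M = 1 := by
          show Nat.gcd (Int.natAbs 2) (Int.natAbs M) = 1
          simp only [Int.natAbs_natCast]
          exact Nat.coprime_two_left.mpr hod
        have hn1 : n ∣ (1 : ℤ) := by
          have := H 2 1 hcop2 hcop1'
          simpa using this
        exact hn1.trans (one_dvd _)
    · intro hn a d ha hd
      rcases Nat.even_or_odd M with hev | hod
      · have hg : Nat.gcd M 2 = 2 := Nat.gcd_eq_right hev.two_dvd
        rw [hg] at hn
        refine hn.trans ?_
        have hodd : ∀ x : ℤ, Int.gcd x (M : ℤ) = 1 → ¬ (2:ℤ) ∣ x := by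
          intro x hx h2
          have h2n : (2:ℕ) ∣ x.natAbs := by
            simpa using Int.natAbs_dvd_natAbs.mpr h2
          have h2M : (2:ℕ) ∣ ((M:ℤ)).natAbs := by
            simpa using hev.two_dvd
          have : (2:ℕ) ∣ Int.gcd x (M:ℤ) := Nat.dvd_gcd h2n h2M
          rw [hx] at this
          norm_num at this
        have : Even (a - d) := Int.even_sub.mpr
          (iff_of_false (fun h => hodd a ha (h.two_dvd))
            (fun h => hodd d hd (h.two_dvd)))
        exact_mod_cast this.two_dvd
      · have hg : Nat.gcd M 2 = 1 := Nat.coprime_two_right.mpr hod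
        rw [hg] at hn
        exact (by exact_mod_cast hn : n ∣ (1:ℤ)).trans (one_dvd _)
  · -- part 4
    intro a b c d hdet hc
    have := backward_core M hM a d (det_to_modeq a b c d hdet hc)
    exact Int.modEq_iff_dvd.mpr (by rw [show d - a = -(a-d) by ring]; exact dvd_neg.mpr this)
end
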